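/- Let u ∈ V be a node of out-degree 0 in G (no edge of E starts at u), let G − u denote the subgraph of G induced on V ∖ {u}, and let T′ be a BFS-tree of G − u. Then the ordered spanning tree of G obtained from T′ by adding u as the leftmost child of r — that is, with parent r and placed first in the sibling order of the children of r — is a BFS-tree of G. -/

import Mathlib

namespace BFSFormal

variable {V : Type} [Fintype V] [DecidableEq V]

/-- An ordered rooted tree structure on `V ∪ {r}`, where the dummy root `r`
is represented by `none`.  `parent v = none` means the parent of `v` is `r`;
`children w` lists the children of `w` in sibling order. -/
structure PreTree (V : Type) where
  parent : V → Option V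
  children : Option V → List V

/-- One step of the parent function, with `r` (= `none`) absorbing. -/
def parentStep (T : PreTree V) : Option V → Option V
  | none => none
  | some v => T.parent v

/-- `T` is an ordered spanning tree of the directed graph on `V` with edge set `E`
(augmented with the dummy root `r`): iterating the parent function from any node
reaches `r`; every tree edge `(P v, v)` with `P v ≠ r` lies in `E`; and the
children lists give, without repetition, exactly the children of each node. -/
def IsOST (E : Finset (V × V)) (T : PreTree V) : Prop :=
  (∀ v : V, ∃ k : ℕ, (parentStep T)^[k] (some v) = none) ∧
  (∀ v u : V, T.parent v = some u → (u, v) ∈ E) ∧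
  (∀ w : Option V, (T.children w).Nodup) ∧
  (∀ (w : Option V) (v : V), v ∈ T.children w ↔ T.parent v = w)

/-- Replace each node of a list by its list of children (used to pass from one
level of a subtree to the next, keeping the sibling orders). -/
def expand (T : PreTree V) (L : List V) : List V :=
  L.flatMap fun v => T.children (some v)

/-- The breadth-first listing of the nodes of `T`: for each child `c` of the root `r`
in sibling order, all nodes of the subtree rooted at `c` are listed, in level
(breadth-first) order determined by the sibling orders, before the subtree of any
later child of `r`. -/
def bfoList (T : PreTree V) : List V :=
  (T.children none).flatMap fun c =>
    (List.range (Fintype.card V + 1)).flatMap fun k => (expand T)^[k] [c]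

/-- The breadth-first order of a node of `V` on `T` (the root `r` gets `0`,
the nodes of `V` get `1, …, n` in the order of `bfoList`). -/
def bfo (T : PreTree V) (v : V) : ℕ := (bfoList T).idxOf v + 1

/-- Breadth-first order extended to `V ∪ {r}`, with `bfo r = 0`. -/
def bfoOpt (T : PreTree V) : Option V → ℕ
  | none => 0
  | some v => bfo T v

/-- `(u, v)` is a V-BFS edge with respect to `T`:
`bfo u < bfo v`, `P v ≠ r`, and `bfo u < bfo (P v)`. -/
def IsVBFS (T : PreTree V) (e : V × V) : Prop :=
  bfo T e.1 < bfo T e.2 ∧ T.parent e.2 ≠ none ∧ bfo T e.1 < bfoOpt T (T.parent e.2)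

instance (T : PreTree V) (e : V × V) : Decidable (IsVBFS T e) := by
  unfold IsVBFS; infer_instance

/-- `T` is a BFS-tree of the graph with edge set `E` : it is an ordered spanning
tree of that graph and no edge of `E` is a V-BFS edge with respect to `T`. -/
def IsBFSTree (E : Finset (V × V)) (T : PreTree V) : Prop :=
  IsOST E T ∧ ∀ e ∈ E, ¬ IsVBFS T e

/-- `LLSP E` : the number of edges of a longest simple directed path of the graph
with edge set `E`. -/
noncomputable def LLSP (E : Finset (V × V)) : ℕ :=
  sSup {k : ℕ | ∃ p : List V, p.Nodup ∧ p.Chain' (fun a b => (a, b) ∈ E) ∧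
    p.length = k + 1}

/-- `EL` is an enumeration `e₁, …, e_m` of the edge set `E`. -/
def IsEnum (E : Finset (V × V)) (EL : List (V × V)) : Prop :=
  EL.Nodup ∧ ∀ e : V × V, e ∈ EL ↔ e ∈ E

/-- The initial ordered spanning tree of EE-BFS / EB-BFS: every node of `V` is a
child of `r`, in a fixed sibling order. -/
def IsInitTree (T : PreTree V) : Prop :=
  (∀ v : V, T.parent v = none) ∧ (T.children none).Nodup ∧
  (∀ v : V, v ∈ T.children none) ∧ (∀ v : V, T.children (some v) = [])

/-- Restructuring step of EE-BFS: make `v` the rightmost child of `u` (the parent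
of `v` becomes `u` and `v` is placed last in the sibling order of the children of
`u`), all other parents and sibling orders being unchanged. -/
def restructure (T : PreTree V) (u v : V) : PreTree V where
  parent w := if w = v then some u else T.parent w
  children w :=
    if w = some u then (T.children (some u)).erase v ++ [v]
    else (T.children w).erase v

/-- Scanning a list of edges, EE-BFS style: each scanned edge that is a V-BFS edge
with respect to the current tree triggers a restructuring. -/
def EEscan (EL : List (V × V)) (T : PreTree V) : PreTree V :=
  EL.foldl (fun Tc e => if IsVBFS Tc e then restructure Tc e.1 e.2 else Tc) T

/-- One pass of EE-BFS over the fixed enumeration `EL` of `E`. -/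
def EEstep (EL : List (V × V)) (T : PreTree V) : PreTree V := EEscan EL T

/- ------------------  IM-BFS  ------------------ -/

/-- State of the deterministic BFS of IM-BFS: the FIFO queue, the set of nodes
already enqueued (adopted), and the adoption records `(new parent, child)` in
adoption order. -/
structure BFSState (V : Type) where
  queue : List V
  marked : Finset V
  adopts : List (Option V × V)

/-- Enqueue, with prospective parent `p`, the candidates in order; a node already
enqueued before is ignored (it was adopted the first time it was enqueued). -/
def enq (p : Option V) (cands : List V) (s : BFSState V) : BFSState V :=
  cands.foldl
    (fun s c =>
      if c ∈ s.marked then s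
      else ⟨s.queue ++ [c], insert c s.marked, s.adopts ++ [(p, c)]⟩) s

/-- The main loop of IM-BFS (fuel-based).  When the queue is nonempty, the first
node `u` is dequeued and visited: the children of `u` in `T` (in sibling order)
and then the targets of the edges of `EL` with source `u` (in list order) are
enqueued.  When the queue is empty, the earliest (in sibling order) not yet
enqueued child of `r` in `T` is enqueued with parent `r`; if all nodes have been
enqueued the adoption records are returned. -/
noncomputable def imBFSAux (T : PreTree V) (EL : List (V × V)) :
    ℕ → BFSState V → List (Option V × V)
  | 0, s => s.adopts
  | fuel + 1, s =>
    match s.queue with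
    | u :: rest =>
        let cands := T.children (some u) ++
          (EL.filter fun e => decide (e.1 = u)).map Prod.snd
        imBFSAux T EL fuel (enq (some u) cands ⟨rest, s.marked, s.adopts⟩)
    | [] =>
        match (T.children none).find? (fun c => decide (c ∉ s.marked)) with
        | some c => imBFSAux T EL fuel (enq none [c] s)
        | none =>
            match (Finset.univ : Finset V).toList.find?
                (fun v => decide (v ∉ s.marked)) with
            | some v => imBFSAux T EL fuel (enq none [v] s)
            | none => s.adopts

/-- `imBFS T EL` : the ordered spanning tree produced by the deterministic
breadth-first search, started at `r`, of the graph whose edges are the tree edges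
of `T` together with the edges occurring in the list `EL` (Stipulation 1):
each node's new parent is the node during whose processing it was first enqueued,
and the children of each node are ordered by adoption time. -/
noncomputable def imBFS (T : PreTree V) (EL : List (V × V)) : PreTree V :=
  let ad := imBFSAux T EL (2 * Fintype.card V + 1) ⟨[], ∅, []⟩
  { parent := fun v =>
      match ad.find? (fun pc => decide (pc.2 = v)) with
      | some pc => pc.1
      | none => none
    children := fun w => (ad.filter fun pc => decide (pc.1 = w)).map Prod.snd }

/-- The set of tree edges `(P v, v)` of `T` with `P v ≠ r`. -/
def treeEdges (T : PreTree V) : Finset (V × V) :=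
  Finset.univ.filter fun e : V × V => T.parent e.2 = some e.1

/- ------------------  EB-BFS  ------------------ -/

/-- One pass of EB-BFS (also the map `RE(𝔼₁, …, 𝔼_k)`): replace the current tree
`T` by `IM-BFS(T, 𝔼)` successively for each batch `𝔼`. -/
noncomputable def EBstep (batches : List (List (V × V))) (T : PreTree V) : PreTree V :=
  batches.foldl imBFS T

/-- The pass of EB-BFS over `batches` starting from `T` is one during which every
batch replacement leaves the edge set of the tree unchanged. -/
def CleanPass (batches : List (List (V × V))) (T : PreTree V) : Prop :=
  ∀ j < batches.length,
    (imBFS ((batches.take j).foldl imBFS T) (batches.getD j [])).parent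
      = ((batches.take j).foldl imBFS T).parent

/- ------------------  the sublist S(T, 𝔼)  ------------------ -/

/-- `S T EL` : if `EL` contains no V-BFS edge w.r.t. `T`, the empty list; otherwise,
letting `e₁ = (u₁, v₁)` be the earliest V-BFS edge of `EL` whose tail has minimal
breadth-first order among tails of V-BFS edges of `EL`, the sublist of `EL` (in the
same order) of the edges `(u, v)` at the position of `e₁` or later with
`u ≠ P(v)`, `bfo u ≥ bfo u₁` and `bfo v ≥ bfo u₁`. -/
def S (T : PreTree V) (EL : List (V × V)) : List (V × V) :=
  let vb := EL.filter fun e => decide (IsVBFS T e)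
  match (vb.map fun e => bfo T e.1).min? with
  | none => []
  | some b =>
      (EL.dropWhile fun e => !(decide (IsVBFS T e) && decide (bfo T e.1 = b))).filter
        fun e => decide (T.parent e.2 ≠ some e.1) && decide (b ≤ bfo T e.1)
          && decide (b ≤ bfo T e.2)

/-- The map sending `T` to `T_{k+1}` where `T₁ = T`, `S_j = S(T_j, E_j)` and
`T_{j+1} = IM-BFS(T_j, S_j)` (i.e. `RE(S₁, …, S_k)` with the `S`-lists recomputed
from the successively current trees). -/
noncomputable def reSstep (batches : List (List (V × V))) (T : PreTree V) : PreTree V :=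
  batches.foldl (fun Tc EL => imBFS Tc (S Tc EL)) T

/-- The list `[S₁, …, S_k]` of the sublists computed along the run
`T₁ = T`, `S_j = S(T_j, E_j)`, `T_{j+1} = IM-BFS(T_j, S_j)`. -/
noncomputable def runS (batches : List (List (V × V))) (T : PreTree V) : List (List (V × V)) :=
  (List.range batches.length).map fun j =>
    S (reSstep (batches.take j) T) (batches.getD j [])

/- ------------------  depth and depth'  ------------------ -/

/-- The depth of `v` in `T`: the number of tree edges on the path from `r` to `v`. -/
noncomputable def depth (T : PreTree V) (v : V) : ℕ :=
  sInf {k : ℕ | (parentStep T)^[k] (some v) = none}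

/-- The topmost proper ancestor of `v` (the child of `r` whose subtree contains `v`). -/
noncomputable def topAnc (T : PreTree V) (v : V) : Option V :=
  (parentStep T)^[depth T v - 1] (some v)

/-- `d(T_c)` : the maximum depth in `T` of a node of the subtree of `T` rooted at
the child `c` of `r`. -/
noncomputable def subtreeMaxDepth (T : PreTree V) (c : V) : ℕ :=
  Finset.univ.sup fun u : V => if topAnc T u = some c then depth T u else 0

/-- `depth′(v, T) = Σ_{1 ≤ l ≤ j−1} d(T_l) + depth(v, T)` where `v` belongs to the
subtree `T_j` of the `j`-th child of `r` in sibling order. -/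
noncomputable def depth' (T : PreTree V) (v : V) : ℕ :=
  match topAnc T v with
  | none => depth T v
  | some c =>
      (((T.children none).takeWhile fun x => decide (x ≠ c)).map
        (subtreeMaxDepth T)).sum + depth T v

/- ------------------  node removal (statements 13, 14)  ------------------ -/

/-- The edge set of the induced subgraph `G − u`, on the subtype `{v // v ≠ u}`. -/
def Esub (E : Finset (V × V)) (u : V) :
    Finset ({v : V // v ≠ u} × {v : V // v ≠ u}) :=
  Finset.univ.filter fun e => ((e.1 : V), (e.2 : V)) ∈ E

/-- Extend an ordered spanning tree `T'` of `G − u` to one of `G` by adding `u`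
as the rightmost child of `r`. -/
def extendRight (u : V) (T' : PreTree {v : V // v ≠ u}) : PreTree V where
  parent v := if h : v = u then none else (T'.parent ⟨v, h⟩).map Subtype.val
  children w :=
    match w with
    | none => (T'.children none).map Subtype.val ++ [u]
    | some x =>
        if hx : x = u then []
        else (T'.children (some ⟨x, hx⟩)).map Subtype.val

/-- Extend an ordered spanning tree `T'` of `G − u` to one of `G` by adding `u`
as the leftmost child of `r`. -/
def extendLeft (u : V) (T' : PreTree {v : V // v ≠ u}) : PreTree V where
  parent v := if h : v = u then none else (T'.parent ⟨v, h⟩).map Subtype.val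
  children w :=
    match w with
    | none => u :: (T'.children none).map Subtype.val
    | some x =>
        if hx : x = u then []
        else (T'.children (some ⟨x, hx⟩)).map Subtype.val

section Stmt14Aux

set_option linter.unusedSectionVars false

lemma aux_card (u : V) : Fintype.card {v : V // v ≠ u} + 1 = Fintype.card V := by
  have h : Fintype.card {v : V // ¬ (v = u)} = Fintype.card V - Fintype.card {v : V // v = u} :=
    Fintype.card_subtype_compl (fun v : V => v = u)
  rw [Fintype.card_subtype_eq] at h
  have h2 : 1 ≤ Fintype.card V := Fintype.card_pos_iff.mpr ⟨u⟩
  have h3 : Fintype.card {v : V // v ≠ u} = Fintype.card {v : V // ¬ (v = u)} := rfl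
  omega

lemma aux_parent_eL (u : V) (T' : PreTree {v : V // v ≠ u}) (x : {v : V // v ≠ u}) :
    (extendLeft u T').parent x.val = (T'.parent x).map Subtype.val := by
  show (if h : x.val = u then none else (T'.parent ⟨x.val, h⟩).map Subtype.val) = _
  rw [dif_neg x.2]

lemma aux_parentStep_eL (u : V) (T' : PreTree {v : V // v ≠ u}) (o : Option {v : V // v ≠ u}) :
    parentStep (extendLeft u T') (o.map Subtype.val) = (parentStep T' o).map Subtype.val := by
  cases o with
  | none => rfl
  | some x => exact aux_parent_eL u T' x

lemma aux_iter_parentStep_eL (u : V) (T' : PreTree {v : V // v ≠ u}) (k : ℕ)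
    (o : Option {v : V // v ≠ u}) :
    (parentStep (extendLeft u T'))^[k] (o.map Subtype.val)
      = ((parentStep T')^[k] o).map Subtype.val := by
  induction k generalizing o with
  | zero => rfl
  | succ k ih =>
      rw [Function.iterate_succ_apply, Function.iterate_succ_apply, aux_parentStep_eL, ih]

lemma aux_children_eL (u : V) (T' : PreTree {v : V // v ≠ u}) (c : {v : V // v ≠ u}) :
    (extendLeft u T').children (some c.val) = (T'.children (some c)).map Subtype.val := by
  show (if hx : c.val = u then [] else (T'.children (some ⟨c.val, hx⟩)).map Subtype.val) = _
  rw [dif_neg c.2]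

lemma aux_expand_eL (u : V) (T' : PreTree {v : V // v ≠ u}) (L : List {v : V // v ≠ u}) :
    expand (extendLeft u T') (L.map Subtype.val) = (expand T' L).map Subtype.val := by
  simp only [expand, List.flatMap_map, List.map_flatMap]
  congr 1; funext c; exact aux_children_eL u T' c

lemma aux_iter_expand_eL (u : V) (T' : PreTree {v : V // v ≠ u}) (k : ℕ)
    (L : List {v : V // v ≠ u}) :
    (expand (extendLeft u T'))^[k] (L.map Subtype.val) = ((expand T')^[k] L).map Subtype.val := by
  induction k generalizing L with
  | zero => rfl
  | succ k ih => rw [Function.iterate_succ_apply, Function.iterate_succ_apply, aux_expand_eL, ih]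

lemma aux_iter_expand_nil (T : PreTree V) (k : ℕ) : (expand T)^[k] [] = [] :=
  Function.iterate_fixed rfl k

lemma aux_mem_iter_expand (T : PreTree V)
    (hc : ∀ (w : Option V) (v : V), v ∈ T.children w ↔ T.parent v = w)
    (k : ℕ) (L : List V) (v : V) (hv : v ∈ (expand T)^[k] L) :
    ∃ w ∈ L, (parentStep T)^[k] (some v) = some w := by
  induction k generalizing v with
  | zero => exact ⟨v, hv, rfl⟩
  | succ k ih =>
      rw [Function.iterate_succ_apply'] at hv
      simp only [expand, List.mem_flatMap] at hv
      obtain ⟨w, hw, hvw⟩ := hv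
      obtain ⟨c, hcmem, hwc⟩ := ih w hw
      refine ⟨c, hcmem, ?_⟩
      rw [Function.iterate_succ_apply]
      have hp : parentStep T (some v) = some w := (hc (some w) v).mp hvw
      rw [hp, hwc]

lemma aux_iter_lt_card (T : PreTree V)
    (hterm : ∀ v : V, ∃ k : ℕ, (parentStep T)^[k] (some v) = none)
    (v : V) (k : ℕ) (h : (parentStep T)^[k] (some v) ≠ none) : k < Fintype.card V := by
  classical
  have hne := hterm v
  set m := Nat.find hne with hm
  have hmnone : (parentStep T)^[m] (some v) = none := Nat.find_spec hne
  have hkm : k < m := by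
    by_contra hle
    push_neg at hle
    apply h
    have h2 : (parentStep T)^[(k - m) + m] (some v) = none := by
      rw [Function.iterate_add_apply, hmnone]
      exact Function.iterate_fixed rfl (k - m)
    rwa [Nat.sub_add_cancel hle] at h2
  have hlt : ∀ i < m, (parentStep T)^[i] (some v) ≠ none := fun i hi hnone =>
    Nat.find_min hne hi hnone
  let f : Fin m → V := fun i =>
    ((parentStep T)^[i.val] (some v)).get (by
      rcases hx : (parentStep T)^[i.val] (some v) with _ | w
      · exact absurd hx (hlt i.val i.2)
      · simp)
  have hf : ∀ i : Fin m, (parentStep T)^[i.val] (some v) = some (f i) := fun i => by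
    simp [f]
  have hinj : Function.Injective f := by
    intro i j hij
    wlog hle : i ≤ j generalizing i j
    · exact (this hij.symm (le_of_not_ge hle)).symm
    by_contra hne'
    have hij' : i.val < j.val := Fin.lt_def.mp (lt_of_le_of_ne hle hne')
    have heq : (parentStep T)^[i.val] (some v) = (parentStep T)^[j.val] (some v) := by
      rw [hf i, hf j, hij]
    have hbad : (parentStep T)^[m - j.val + i.val] (some v) = none := by
      rw [Function.iterate_add_apply, heq, ← Function.iterate_add_apply,
        Nat.sub_add_cancel (le_of_lt j.2), hmnone]
    exact hlt _ (by omega) hbad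
  calc k < m := hkm
    _ = Fintype.card (Fin m) := (Fintype.card_fin m).symm
    _ ≤ Fintype.card V := Fintype.card_le_of_injective f hinj

lemma aux_bfoList_eL (u : V) (T' : PreTree {v : V // v ≠ u})
    (hterm : ∀ v, ∃ k, (parentStep T')^[k] (some v) = none)
    (hc : ∀ (w : Option {v : V // v ≠ u}) (v), v ∈ T'.children w ↔ T'.parent v = w) :
    bfoList (extendLeft u T') = u :: (bfoList T').map Subtype.val := by
  have hcard := aux_card u
  have hchild : (extendLeft u T').children none = u :: (T'.children none).map Subtype.val := rfl
  rw [bfoList, hchild, List.flatMap_cons]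
  have h1 : ((List.range (Fintype.card V + 1)).flatMap
      fun k => (expand (extendLeft u T'))^[k] [u]) = [u] := by
    rw [List.range_succ_eq_map, List.flatMap_cons, List.flatMap_map]
    have h0 : (expand (extendLeft u T'))^[0] [u] = [u] := rfl
    have hsucc : ∀ k : ℕ, (expand (extendLeft u T'))^[k.succ] [u] = [] := by
      intro k
      rw [Function.iterate_succ_apply]
      have he : expand (extendLeft u T') [u] = [] := by
        show (extendLeft u T').children (some u) ++ [] = []
        show (if hx : u = u then [] else (T'.children (some ⟨u, hx⟩)).map Subtype.val) ++ [] = []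
        rw [dif_pos rfl]
        rfl
      rw [he, aux_iter_expand_nil]
    have h2 : ((List.range (Fintype.card V)).flatMap
        fun k => (expand (extendLeft u T'))^[k.succ] [u]) = [] := by
      rw [List.eq_nil_iff_forall_not_mem]
      intro x hx
      rw [List.mem_flatMap] at hx
      obtain ⟨k, _, hk⟩ := hx
      rw [hsucc k] at hk
      exact absurd hk List.not_mem_nil
    rw [h0, h2]
    rfl
  rw [h1, List.singleton_append]
  simp only [List.flatMap_map, bfoList, List.map_flatMap]
  have hfun : ∀ c : {v : V // v ≠ u},
      ((List.range (Fintype.card V + 1)).flatMap fun k => (expand (extendLeft u T'))^[k] [c.val])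
      = (List.range (Fintype.card {v : V // v ≠ u} + 1)).flatMap
          fun k => List.map Subtype.val ((expand T')^[k] [c]) := by
    intro c
    have hcv : ∀ k : ℕ, (expand (extendLeft u T'))^[k] [c.val]
        = ((expand T')^[k] [c]).map Subtype.val := by
      intro k
      have : ([c.val] : List V) = ([c].map Subtype.val) := rfl
      rw [this, aux_iter_expand_eL]
    have hn : Fintype.card V + 1 = (Fintype.card {v : V // v ≠ u} + 1) + 1 := by omega
    rw [hn, List.range_succ, List.flatMap_append]
    have hlast : (([Fintype.card {v : V // v ≠ u} + 1] : List ℕ).flatMap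
        fun k => (expand (extendLeft u T'))^[k] [c.val]) = [] := by
      show (expand (extendLeft u T'))^[Fintype.card {v : V // v ≠ u} + 1] [c.val] ++ [] = []
      rw [hcv]
      have hnil : (expand T')^[Fintype.card {v : V // v ≠ u} + 1] [c] = [] := by
        rw [List.eq_nil_iff_forall_not_mem]
        intro v hv
        obtain ⟨w, _, hw⟩ := aux_mem_iter_expand T' hc _ [c] v hv
        have hlt := aux_iter_lt_card T' hterm v (Fintype.card {v : V // v ≠ u} + 1)
          (by rw [hw]; simp)
        omega
      rw [hnil]
      rfl
    rw [hlast, List.append_nil]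
    simp only [hcv]
  simp only [hfun]

lemma aux_indexOf_map {α β : Type*} [DecidableEq α] [DecidableEq β] (f : α → β)
    (hf : Function.Injective f) (l : List α) (a : α) :
    (l.map f).idxOf (f a) = l.idxOf a := by
  induction l with
  | nil => rfl
  | cons b l ih =>
      simp only [List.map_cons, List.idxOf_cons]
      by_cases h : b = a
      · subst h; simp
      · have h1 : (b == a) = false := by simp [h]
        have h2 : (f b == f a) = false := by simp [hf.ne h]
        simp [h1, h2, ih]

end Stmt14Aux

theorem stmt14 {V : Type} [Fintype V] [DecidableEq V]
    (hV : 1 ≤ Fintype.card V) (E : Finset (V × V))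
    (hE : ∀ e ∈ E, e.1 ≠ e.2)
    (u : V) (hu : ∀ e ∈ E, e.1 ≠ u)
    (T' : PreTree {v : V // v ≠ u}) (hT' : IsBFSTree (Esub E u) T') :
    IsBFSTree E (extendLeft u T') := by
  obtain ⟨⟨h1', h2', h3', h4'⟩, hnv⟩ := hT'
  have hbfo : bfoList (extendLeft u T') = u :: (bfoList T').map Subtype.val :=
    aux_bfoList_eL u T' h1' h4'
  have hparu : (extendLeft u T').parent u = none := by
    show (if h : u = u then none else (T'.parent ⟨u, h⟩).map Subtype.val) = none
    rw [dif_pos rfl]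
  have hbx : ∀ x : {v : V // v ≠ u},
      bfo (extendLeft u T') x.val = bfo T' x + 1 := by
    intro x
    rw [bfo, bfo, hbfo, List.idxOf_cons]
    have hne : (u == x.val) = false := by
      simp only [beq_eq_false_iff_ne, ne_eq]
      exact fun h => x.2 h.symm
    rw [hne]
    show (List.map Subtype.val (bfoList T')).idxOf x.val + 1 + 1 = _
    rw [aux_indexOf_map Subtype.val Subtype.val_injective]
  constructor
  · refine ⟨?_, ?_, ?_, ?_⟩
    · -- termination
      intro v
      by_cases h : v = u
      · refine ⟨1, ?_⟩
        rw [Function.iterate_one]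
        show (extendLeft u T').parent v = none
        rw [h]; exact hparu
      · obtain ⟨k, hk⟩ := h1' ⟨v, h⟩
        refine ⟨k, ?_⟩
        have hv : (some v : Option V) = (some (⟨v, h⟩ : {v : V // v ≠ u})).map Subtype.val := rfl
        rw [hv, aux_iter_parentStep_eL, hk]
        rfl
    · -- tree edges in E
      intro v w hvw
      by_cases h : v = u
      · rw [h, hparu] at hvw
        exact absurd hvw (by simp)
      · rw [aux_parent_eL u T' ⟨v, h⟩, Option.map_eq_some_iff] at hvw
        obtain ⟨w', hw', rfl⟩ := hvw
        have hmem := h2' ⟨v, h⟩ w' hw'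
        simpa [Esub] using hmem
    · -- nodup children
      intro w
      cases w with
      | none =>
          show (u :: (T'.children none).map Subtype.val).Nodup
          refine List.nodup_cons.mpr ⟨?_, (h3' none).map Subtype.val_injective⟩
          intro hm
          rw [List.mem_map] at hm
          obtain ⟨x, _, hx⟩ := hm
          exact x.2 hx
      | some x =>
          by_cases hx : x = u
          · show (if hx' : x = u then []
              else (T'.children (some ⟨x, hx'⟩)).map Subtype.val).Nodup
            rw [dif_pos hx]
            exact List.nodup_nil
          · have hceq := aux_children_eL u T' ⟨x, hx⟩
            show ((extendLeft u T').children (some x)).Nodup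
            rw [show (some x : Option V)
                = some ((⟨x, hx⟩ : {v : V // v ≠ u}).val) from rfl, hceq]
            exact (h3' _).map Subtype.val_injective
    · -- children ↔ parent
      intro w v
      by_cases hv : v = u
      · cases w with
        | none =>
            constructor
            · intro _
              rw [hv]
              exact hparu
            · intro _
              rw [hv]
              exact List.mem_cons_self
        | some x =>
            constructor
            · intro hm
              exfalso
              by_cases hx : x = u
              · have hnil : (extendLeft u T').children (some x) = [] := by
                  show (if h : x = u then []
                    else (T'.children (some ⟨x, h⟩)).map Subtype.val) = []
                  rw [dif_pos hx]
                rw [hnil] at hm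
                exact List.not_mem_nil hm
              · rw [show (some x : Option V)
                    = some ((⟨x, hx⟩ : {v : V // v ≠ u}).val) from rfl,
                  aux_children_eL u T' ⟨x, hx⟩, List.mem_map] at hm
                obtain ⟨y, _, hy⟩ := hm
                exact y.2 (hy.trans hv)
            · intro hp
              rw [hv, hparu] at hp
              exact absurd hp (by simp)
      · have hpv : (extendLeft u T').parent v
            = (T'.parent ⟨v, hv⟩).map Subtype.val := aux_parent_eL u T' ⟨v, hv⟩
        cases w with
        | none =>
            show v ∈ u :: (T'.children none).map Subtype.val ↔ _
            rw [List.mem_cons, hpv]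
            constructor
            · rintro (h | h)
              · exact absurd h hv
              · rw [List.mem_map] at h
                obtain ⟨y, hy, hyv⟩ := h
                have hye : (⟨v, hv⟩ : {v : V // v ≠ u}) = y := Subtype.ext hyv.symm
                rw [hye, (h4' none y).mp hy]
                rfl
            · intro h
              right
              rw [Option.map_eq_none_iff] at h
              rw [List.mem_map]
              exact ⟨⟨v, hv⟩, (h4' none ⟨v, hv⟩).mpr h, rfl⟩
        | some x =>
            by_cases hx : x = u
            · have hnil : (extendLeft u T').children (some x) = [] := by
                show (if h : x = u then []
                  else (T'.children (some ⟨x, h⟩)).map Subtype.val) = []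
                rw [dif_pos hx]
              rw [hnil, hpv]
              simp only [List.not_mem_nil, false_iff]
              intro h
              rw [Option.map_eq_some_iff] at h
              obtain ⟨a, _, ha⟩ := h
              exact a.2 (ha.trans hx)
            · rw [show (some x : Option V)
                  = some ((⟨x, hx⟩ : {v : V // v ≠ u}).val) from rfl,
                aux_children_eL u T' ⟨x, hx⟩, hpv]
              constructor
              · intro h
                rw [List.mem_map] at h
                obtain ⟨y, hy, hyv⟩ := h
                have hye : (⟨v, hv⟩ : {v : V // v ≠ u}) = y := Subtype.ext hyv.symm
                rw [hye, (h4' (some ⟨x, hx⟩) y).mp hy]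
                rfl
              · intro h
                rw [Option.map_eq_some_iff] at h
                obtain ⟨a, ha, ha2⟩ := h
                rw [List.mem_map]
                refine ⟨⟨v, hv⟩, ?_, rfl⟩
                rw [h4' (some ⟨x, hx⟩) ⟨v, hv⟩, ha]
                exact congrArg some (Subtype.ext ha2)
  · -- no V-BFS edge
    rintro ⟨a, b⟩ hab hvbfs
    obtain ⟨hlt1, hpne, hlt2⟩ := hvbfs
    have hbne : b ≠ u := fun h => hpne (by rw [show ((a, b) : V × V).2 = b from rfl, h]; exact hparu)
    have hane : a ≠ u := hu (a, b) hab
    have hpb : (extendLeft u T').parent b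
        = (T'.parent ⟨b, hbne⟩).map Subtype.val := aux_parent_eL u T' ⟨b, hbne⟩
    have hpb' : T'.parent ⟨b, hbne⟩ ≠ none := by
      intro h
      apply hpne
      show (extendLeft u T').parent b = none
      rw [hpb, h]
      rfl
    obtain ⟨p, hp⟩ := Option.ne_none_iff_exists'.mp hpb'
    have ha1 : bfo (extendLeft u T') a = bfo T' ⟨a, hane⟩ + 1 := hbx ⟨a, hane⟩
    have hb1 : bfo (extendLeft u T') b = bfo T' ⟨b, hbne⟩ + 1 := hbx ⟨b, hbne⟩
    have hp1 : bfo (extendLeft u T') p.val = bfo T' p + 1 := hbx p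
    have hlt2' : bfo (extendLeft u T') a < bfo (extendLeft u T') p.val := by
      have : (extendLeft u T').parent ((a, b) : V × V).2 = some p.val := by
        show (extendLeft u T').parent b = some p.val
        rw [hpb, hp]
        rfl
      rw [this] at hlt2
      exact hlt2
    apply hnv (⟨a, hane⟩, ⟨b, hbne⟩) (by simp [Esub, hab])
    refine ⟨?_, ?_, ?_⟩
    · show bfo T' ⟨a, hane⟩ < bfo T' ⟨b, hbne⟩
      have hlt1' : bfo (extendLeft u T') a < bfo (extendLeft u T') b := hlt1
      omega
    · show T'.parent ⟨b, hbne⟩ ≠ none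
      exact hpb'
    · show bfo T' ⟨a, hane⟩ < bfoOpt T' (T'.parent ⟨b, hbne⟩)
      rw [hp]
      show bfo T' ⟨a, hane⟩ < bfo T' p
      omega

end BFSFormal
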